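/- Let D be a filter on κ such that the Boolean algebra P(κ)/D satisfies the μ⁺-chain condition, and let λ̄ = ⟨λ_i : i < κ⟩ be a sequence of cardinals. If T⁰_D(λ̄) > μ, then T⁰_D(λ̄) = T¹_D(λ̄) = T²_D(λ̄) and the supremum in the definition of T⁰_D(λ̄) is attained. -/

import Mathlib

universe u

/-- `f ≠_D g` : `f` and `g` differ on a set of the filter `D`. -/
def neD {κ : Type u} (D : Filter κ) (f g : κ → Ordinal.{u}) : Prop :=
  {i | f i ≠ g i} ∈ D

/-- `T⁰_D(λ̄)`: sup of cardinalities of pairwise `≠_D` families in `∏ lams i`. -/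
noncomputable def T0 {κ : Type u} (D : Filter κ) (lams : κ → Cardinal.{u}) : Cardinal.{u} :=
  sSup {c : Cardinal.{u} | ∃ f : Ordinal.{u} → κ → Ordinal.{u},
    (∀ α : Ordinal.{u}, α < c.ord → ∀ i : κ, f α i < (lams i).ord) ∧
    (∀ α β : Ordinal.{u}, α < β → β < c.ord → neD D (f α) (f β))}

/-- `T¹_D(λ̄)`: min of cardinalities of maximal pairwise `≠_D` families. -/
noncomputable def T1 {κ : Type u} (D : Filter κ) (lams : κ → Cardinal.{u}) : Cardinal.{u} :=
  sInf {c : Cardinal.{u} | ∃ f : Ordinal.{u} → κ → Ordinal.{u},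
    (∀ α : Ordinal.{u}, α < c.ord → ∀ i : κ, f α i < (lams i).ord) ∧
    (∀ α β : Ordinal.{u}, α < β → β < c.ord → neD D (f α) (f β)) ∧
    (∀ g : κ → Ordinal.{u}, (∀ i : κ, g i < (lams i).ord) →
      ∃ α : Ordinal.{u}, α < c.ord ∧ ¬ neD D g (f α))}

/-- `T²_D(λ̄)`. -/
noncomputable def T2 {κ : Type u} (D : Filter κ) (lams : κ → Cardinal.{u}) : Cardinal.{u} :=
  sInf {c : Cardinal.{u} | ∃ f : Ordinal.{u} → κ → Ordinal.{u},
    (∀ α : Ordinal.{u}, α < c.ord → ∀ i : κ, f α i < (lams i).ord) ∧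
    (∀ g : κ → Ordinal.{u}, (∀ i : κ, g i < (lams i).ord) →
      ∃ α : Ordinal.{u}, α < c.ord ∧ ¬ neD D g (f α))}


namespace S17
open Cardinal

variable {κ : Type u}

def S0set (D : Filter κ) (lams : κ → Cardinal.{u}) : Set Cardinal.{u} :=
  {c : Cardinal.{u} | ∃ f : Ordinal.{u} → κ → Ordinal.{u},
    (∀ α : Ordinal.{u}, α < c.ord → ∀ i : κ, f α i < (lams i).ord) ∧
    (∀ α β : Ordinal.{u}, α < β → β < c.ord → neD D (f α) (f β))}

def S1set (D : Filter κ) (lams : κ → Cardinal.{u}) : Set Cardinal.{u} :=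
  {c : Cardinal.{u} | ∃ f : Ordinal.{u} → κ → Ordinal.{u},
    (∀ α : Ordinal.{u}, α < c.ord → ∀ i : κ, f α i < (lams i).ord) ∧
    (∀ α β : Ordinal.{u}, α < β → β < c.ord → neD D (f α) (f β)) ∧
    (∀ g : κ → Ordinal.{u}, (∀ i : κ, g i < (lams i).ord) →
      ∃ α : Ordinal.{u}, α < c.ord ∧ ¬ neD D g (f α))}

def S2set (D : Filter κ) (lams : κ → Cardinal.{u}) : Set Cardinal.{u} :=
  {c : Cardinal.{u} | ∃ f : Ordinal.{u} → κ → Ordinal.{u},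
    (∀ α : Ordinal.{u}, α < c.ord → ∀ i : κ, f α i < (lams i).ord) ∧
    (∀ g : κ → Ordinal.{u}, (∀ i : κ, g i < (lams i).ord) →
      ∃ α : Ordinal.{u}, α < c.ord ∧ ¬ neD D g (f α))}

lemma T0_eq (D : Filter κ) (lams : κ → Cardinal.{u}) : T0 D lams = sSup (S0set D lams) := rfl
lemma T1_eq (D : Filter κ) (lams : κ → Cardinal.{u}) : T1 D lams = sInf (S1set D lams) := rfl
lemma T2_eq (D : Filter κ) (lams : κ → Cardinal.{u}) : T2 D lams = sInf (S2set D lams) := rfl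

lemma S1_subset_S2 (D : Filter κ) (lams : κ → Cardinal.{u}) :
    S1set D lams ⊆ S2set D lams := by
  rintro c ⟨f, h1, _, h3⟩; exact ⟨f, h1, h3⟩

lemma neD_set_comm (f g : κ → Ordinal.{u}) :
    {i | f i ≠ g i} = {i | g i ≠ f i} := by
  ext i; exact ne_comm

lemma ne_of_neD {D : Filter κ} [D.NeBot] {f g : κ → Ordinal.{u}} (h : neD D f g) :
    f ≠ g := by
  rintro rfl
  have he : {i | f i ≠ f i} = (∅ : Set κ) := by ext i; simp
  rw [neD, he] at h
  exact Filter.empty_notMem D h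

lemma pw_sym {D : Filter κ} {c : Cardinal.{u}} {f : Ordinal.{u} → κ → Ordinal.{u}}
    (hpw : ∀ α β : Ordinal.{u}, α < β → β < c.ord → neD D (f α) (f β))
    {α β : Ordinal.{u}} (hα : α < c.ord) (hβ : β < c.ord) (hne : α ≠ β) :
    {i | f α i ≠ f β i} ∈ D := by
  rcases lt_or_gt_of_ne hne with h | h
  · exact hpw α β h hβ
  · rw [neD_set_comm]; exact hpw β α h hα

/-- The bounded product type. -/
def Pi' (lams : κ → Cardinal.{u}) : Type (u+1) :=
  {g : κ → Ordinal.{u} // ∀ i, g i < (lams i).ord}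

lemma mk_Pi' (lams : κ → Cardinal.{u}) :
    #(Pi' lams) = Cardinal.lift.{u+1} (Cardinal.prod lams) := by
  have e : Pi' lams ≃ (Π i : κ, (Set.Iio ((lams i).ord))) := Equiv.subtypePiEquivPi
  rw [Cardinal.mk_congr e, Cardinal.mk_pi, Cardinal.lift_prod]
  congr 1; ext i
  rw [Ordinal.mk_Iio_ordinal, Cardinal.card_ord]

lemma S0_le_prod {D : Filter κ} [D.NeBot] {lams : κ → Cardinal.{u}} {c : Cardinal.{u}}
    (hc : c ∈ S0set D lams) : c ≤ Cardinal.prod lams := by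
  obtain ⟨f, hbd, hpw⟩ := hc
  have hinj : Function.Injective (fun α : Set.Iio c.ord => (⟨f α.1, hbd α.1 α.2⟩ : Pi' lams)) := by
    rintro ⟨α, hα⟩ ⟨β, hβ⟩ hfe
    have hv : f α = f β := congrArg Subtype.val hfe
    rcases lt_trichotomy α β with h | h | h
    · exact absurd hv (ne_of_neD (hpw α β h hβ))
    · simpa using h
    · exact absurd hv.symm (ne_of_neD (hpw β α h hα))
  have h1 : #(Set.Iio c.ord) ≤ #(Pi' lams) := Cardinal.mk_le_of_injective hinj
  rw [Ordinal.mk_Iio_ordinal, Cardinal.card_ord, mk_Pi', Cardinal.lift_le] at h1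
  exact h1

lemma exists_maximal_enum (D : Filter κ) [D.NeBot] (lams : κ → Cardinal.{u}) :
    ∃ c : Cardinal.{u}, c ∈ S1set D lams := by
  classical
  set Fam : Set (Set (κ → Ordinal.{u})) :=
    {F | (∀ g ∈ F, ∀ i, g i < (lams i).ord) ∧
      ∀ f ∈ F, ∀ g ∈ F, f ≠ g → neD D f g} with hFam
  obtain ⟨M, hM⟩ : ∃ M, Maximal (· ∈ Fam) M := by
    apply zorn_subset
    intro ch hch hchain
    refine ⟨⋃₀ ch, ⟨?_, ?_⟩, fun s hs => Set.subset_sUnion_of_mem hs⟩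
    · rintro g ⟨s, hs, hgs⟩ i
      exact (hch hs).1 g hgs i
    · rintro f ⟨s, hs, hfs⟩ g ⟨t, ht, hgt⟩ hne
      rcases hchain.total hs ht with h | h
      · exact (hch ht).2 f (h hfs) g hgt hne
      · exact (hch hs).2 f hfs g (h hgt) hne
  -- cardinality of M
  have hMP : #(↥M) ≤ Cardinal.lift.{u+1} (Cardinal.prod lams) := by
    rw [← mk_Pi']
    apply Cardinal.mk_le_of_injective
      (f := fun m : ↥M => (⟨m.1, hM.1.1 m.1 m.2⟩ : Pi' lams))
    intro a b hab
    have hv := congrArg Subtype.val hab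
    exact Subtype.ext hv
  obtain ⟨c, hc⟩ := Cardinal.mem_range_lift_of_le hMP
  have hiso : Nonempty (Set.Iio c.ord ≃ ↥M) := by
    rw [← Cardinal.eq, Ordinal.mk_Iio_ordinal, Cardinal.card_ord, hc]
  obtain ⟨e⟩ := hiso
  set f : Ordinal.{u} → κ → Ordinal.{u} :=
    fun α => if h : α < c.ord then (e ⟨α, h⟩ : κ → Ordinal.{u}) else fun _ => 0 with hf
  have hfval : ∀ (α) (h : α < c.ord), f α = (e ⟨α, h⟩ : κ → Ordinal.{u}) := by
    intro α h; simp [hf, h]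
  have hmem : ∀ (α) (h : α < c.ord), f α ∈ M := by
    intro α h; rw [hfval α h]; exact (e ⟨α, h⟩).2
  refine ⟨c, f, ?_, ?_, ?_⟩
  · intro α hα i; exact hM.1.1 _ (hmem α hα) i
  · intro α β hab hβ
    have hα : α < c.ord := hab.trans hβ
    have hne : f α ≠ f β := by
      rw [hfval α hα, hfval β hβ]
      intro hval
      have : e ⟨α, hα⟩ = e ⟨β, hβ⟩ := Subtype.ext hval
      have := e.injective this
      exact absurd (congrArg Subtype.val this) (ne_of_lt hab)
    exact hM.1.2 _ (hmem α hα) _ (hmem β hβ) hne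
  · intro g hg
    by_cases hgM : g ∈ M
    · refine ⟨(e.symm ⟨g, hgM⟩).1, (e.symm ⟨g, hgM⟩).2, ?_⟩
      have : f (e.symm ⟨g, hgM⟩).1 = g := by
        rw [hfval _ (e.symm ⟨g, hgM⟩).2]
        have : (⟨(e.symm ⟨g, hgM⟩).1, (e.symm ⟨g, hgM⟩).2⟩ : Set.Iio c.ord)
            = e.symm ⟨g, hgM⟩ := rfl
        rw [this, e.apply_symm_apply]
      rw [this]
      intro hcon
      have : {i | g i ≠ g i} = (∅ : Set κ) := by ext i; simp
      rw [neD, this] at hcon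
      exact Filter.empty_notMem D hcon
    · -- M ∪ {g} is not in Fam
      have hnotFam : M ∪ {g} ∉ Fam := by
        intro hin
        have := hM.2 hin Set.subset_union_left
        exact hgM (this (Set.mem_union_right M rfl))
      have hbd' : ∀ x ∈ M ∪ {g}, ∀ i, x i < (lams i).ord := by
        rintro x (hx | rfl) i
        · exact hM.1.1 x hx i
        · exact hg i
      rw [hFam] at hnotFam
      simp only [Set.mem_setOf_eq, not_and_or] at hnotFam
      rcases hnotFam with h | h
      · exact absurd hbd' h
      push_neg at h
      obtain ⟨x, hx, y, hy, hxy, hnd⟩ := h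
      have key : ∃ m ∈ M, ¬ neD D g m := by
        rcases hx with hx | hx
        · rcases hy with hy | hy
          · exact absurd (hM.1.2 x hx y hy hxy) hnd
          · rcases hy with rfl
            refine ⟨x, hx, ?_⟩
            rw [neD, neD_set_comm] at hnd; exact hnd
        · rcases hx with rfl
          rcases hy with hy | hy
          · exact ⟨y, hy, hnd⟩
          · rcases hy with rfl; exact absurd rfl hxy
      obtain ⟨m, hm, hnm⟩ := key
      refine ⟨(e.symm ⟨m, hm⟩).1, (e.symm ⟨m, hm⟩).2, ?_⟩
      have : f (e.symm ⟨m, hm⟩).1 = m := by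
        rw [hfval _ (e.symm ⟨m, hm⟩).2]
        have : (⟨(e.symm ⟨m, hm⟩).1, (e.symm ⟨m, hm⟩).2⟩ : Set.Iio c.ord)
            = e.symm ⟨m, hm⟩ := rfl
        rw [this, e.apply_symm_apply]
      rw [this]; exact hnm

lemma card_le_mul (D : Filter κ) (lams : κ → Cardinal.{u}) (μ : Cardinal.{u})
    (hcc : ¬ ∃ A : Ordinal.{u} → Set κ,
      (∀ ε : Ordinal.{u}, ε < (Order.succ μ).ord → (A ε)ᶜ ∉ D) ∧
      (∀ ε ζ : Ordinal.{u}, ε < ζ → ζ < (Order.succ μ).ord → (A ε ∩ A ζ)ᶜ ∈ D))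
    {c σ : Cardinal.{u}} (hc : c ∈ S0set D lams) (hσ : σ ∈ S2set D lams) :
    c ≤ σ * μ := by
  classical
  obtain ⟨f, hfbd, hfpw⟩ := hc
  obtain ⟨g, hgbd, hgcov⟩ := hσ
  -- choice of covering index
  have hch : ∀ α : Set.Iio c.ord, ∃ γ : Set.Iio σ.ord,
      ¬ neD D (f α.1) (g γ.1) := by
    rintro ⟨α, hα⟩
    obtain ⟨γ, hγ, hnd⟩ := hgcov (f α) (hfbd α hα)
    exact ⟨⟨γ, hγ⟩, hnd⟩
  choose Γ hΓ using hch
  -- fibers of Γ have size at most μ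
  have hfib : ∀ γ0 : Set.Iio σ.ord, #{α : Set.Iio c.ord // Γ α = γ0} ≤ Cardinal.lift.{u+1} μ := by
    intro γ0
    by_contra hbig
    push_neg at hbig
    have hsucc : #(Set.Iio (Order.succ μ).ord) ≤ #{α : Set.Iio c.ord // Γ α = γ0} := by
      rw [Ordinal.mk_Iio_ordinal, Cardinal.card_ord, Cardinal.lift_succ]
      exact Order.succ_le_of_lt hbig
    obtain ⟨j⟩ := Cardinal.le_def _ _ |>.mp hsucc
    set A : Ordinal.{u} → Set κ := fun ε =>
      if h : ε < (Order.succ μ).ord then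
        {i | f (j ⟨ε, h⟩).1.1 i = g γ0.1 i} else ∅ with hA
    apply hcc
    refine ⟨A, ?_, ?_⟩
    · intro ε hε
      rw [hA]; simp only [hε, dif_pos]
      have hnd := hΓ (j ⟨ε, hε⟩).1
      rw [(j ⟨ε, hε⟩).2] at hnd
      rw [neD] at hnd
      have hco : ({i | f (j ⟨ε, hε⟩).1.1 i = g γ0.1 i})ᶜ
          = {i | f (j ⟨ε, hε⟩).1.1 i ≠ g γ0.1 i} := by ext i; simp
      rw [hco]; exact hnd
    · intro ε ζ hεζ hζ
      have hε : ε < (Order.succ μ).ord := hεζ.trans hζ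
      rw [hA]; simp only [hε, hζ, dif_pos]
      set a := (j ⟨ε, hε⟩).1
      set b := (j ⟨ζ, hζ⟩).1
      have hab : a.1 ≠ b.1 := by
        intro h
        have h2 : j ⟨ε, hε⟩ = j ⟨ζ, hζ⟩ := Subtype.ext (Subtype.ext h)
        have h3 := j.injective h2
        exact absurd (congrArg Subtype.val h3) (ne_of_lt hεζ)
      have hD := pw_sym hfpw a.2 b.2 hab
      apply Filter.mem_of_superset hD
      intro i hi
      simp only [Set.mem_setOf_eq] at hi
      simp only [Set.mem_compl_iff, Set.mem_inter_iff, Set.mem_setOf_eq]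
      rintro ⟨h1, h2⟩
      exact hi (h1.trans h2.symm)
  -- now count
  have hcount : #(Set.Iio c.ord) ≤ #(Set.Iio σ.ord) * Cardinal.lift.{u+1} μ := by
    have e := (Equiv.sigmaFiberEquiv Γ)
    rw [← Cardinal.mk_congr e, Cardinal.mk_sigma]
    calc (Cardinal.sum fun γ0 => #{α // Γ α = γ0})
        ≤ Cardinal.sum (fun _ : Set.Iio σ.ord => Cardinal.lift.{u+1} μ) :=
          Cardinal.sum_le_sum _ _ hfib
      _ = #(Set.Iio σ.ord) * Cardinal.lift.{u+1} μ := Cardinal.sum_const' _ _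
  rw [Ordinal.mk_Iio_ordinal, Ordinal.mk_Iio_ordinal, Cardinal.card_ord, Cardinal.card_ord,
    ← Cardinal.lift_mul, Cardinal.lift_le] at hcount
  exact hcount


lemma hcc_finset (D : Filter κ) (μ : Cardinal.{u}) (m : ℕ) (hm : (m : Cardinal.{u}) = μ)
    (hcc : ¬ ∃ A : Ordinal.{u} → Set κ,
      (∀ ε : Ordinal.{u}, ε < (Order.succ μ).ord → (A ε)ᶜ ∉ D) ∧
      (∀ ε ζ : Ordinal.{u}, ε < ζ → ζ < (Order.succ μ).ord → (A ε ∩ A ζ)ᶜ ∈ D)) :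
    ∀ s : Finset (Set κ), (∀ X ∈ s, Xᶜ ∉ D) →
      (∀ X ∈ s, ∀ Y ∈ s, X ≠ Y → (X ∩ Y)ᶜ ∈ D) → s.card ≤ m := by
  classical
  intro s hpos hdisj
  by_contra hbig
  push_neg at hbig
  have hle : m + 1 ≤ s.card := hbig
  have hord : (Order.succ μ).ord = ((m+1 : ℕ) : Ordinal.{u}) := by
    rw [← hm, ← Cardinal.nat_succ, Cardinal.ord_nat]
  set emb : Fin (m+1) → Set κ := fun k => ((s.equivFin.symm (Fin.castLE hle k)) : Set κ)
    with hemb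
  have hembmem : ∀ k, emb k ∈ s := fun k => (s.equivFin.symm (Fin.castLE hle k)).2
  have hembinj : Function.Injective emb := by
    intro a b hab
    have h1 : s.equivFin.symm (Fin.castLE hle a) = s.equivFin.symm (Fin.castLE hle b) :=
      Subtype.ext hab
    have h2 := s.equivFin.symm.injective h1
    exact Fin.castLE_injective hle h2
  set A : Ordinal.{u} → Set κ := fun ε =>
    if h : ∃ k : Fin (m+1), ((k : ℕ) : Ordinal.{u}) = ε then emb h.choose else ∅ with hA
  have hexi : ∀ ε : Ordinal.{u}, ε < (Order.succ μ).ord →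
      ∃ k : Fin (m+1), ((k : ℕ) : Ordinal.{u}) = ε := by
    intro ε hε
    rw [hord] at hε
    obtain ⟨k, rfl⟩ := Ordinal.lt_omega0.mp (hε.trans (Ordinal.nat_lt_omega0 _))
    exact ⟨⟨k, Nat.cast_lt.mp hε⟩, rfl⟩
  apply hcc
  refine ⟨A, ?_, ?_⟩
  · intro ε hε
    rw [hA]; simp only [hexi ε hε, dif_pos]
    exact hpos _ (hembmem _)
  · intro ε ζ hεζ hζ
    have hε := hεζ.trans hζ
    have h1 := hexi ε hε
    have h2 := hexi ζ hζ
    rw [hA]; simp only [h1, h2, dif_pos]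
    apply hdisj _ (hembmem _) _ (hembmem _)
    intro heq
    have := hembinj heq
    have : ((h1.choose : ℕ) : Ordinal.{u}) = ((h2.choose : ℕ) : Ordinal.{u}) := by rw [this]
    rw [h1.choose_spec, h2.choose_spec] at this
    exact absurd this (ne_of_lt hεζ)

def atomP (D : Filter κ) (B : Set κ) : Prop :=
  Bᶜ ∉ D ∧ ∀ Y : Set κ, (B ∩ Y)ᶜ ∉ D → (B ∩ Yᶜ)ᶜ ∈ D

lemma disj_symm {D : Filter κ} {A B : Set κ} (h : (A ∩ B)ᶜ ∈ D) : (B ∩ A)ᶜ ∈ D := by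
  rwa [Set.inter_comm]

lemma exists_atom_below (D : Filter κ) (m : ℕ)
    (hccF : ∀ s : Finset (Set κ), (∀ X ∈ s, Xᶜ ∉ D) →
      (∀ X ∈ s, ∀ Y ∈ s, X ≠ Y → (X ∩ Y)ᶜ ∈ D) → s.card ≤ m)
    (X : Set κ) (hX : Xᶜ ∉ D) : ∃ B, B ⊆ X ∧ atomP D B := by
  classical
  by_contra hno
  push_neg at hno
  have hsplit : ∀ B, B ⊆ X → Bᶜ ∉ D → ∃ Y, (B ∩ Y)ᶜ ∉ D ∧ (B ∩ Yᶜ)ᶜ ∉ D := by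
    intro B hBX hBpos
    have h := hno B hBX
    rw [atomP] at h
    push_neg at h
    exact h hBpos
  have hgrow : ∀ t : ℕ, ∃ s : Finset (Set κ), s.card = t + 1 ∧
      (∀ A ∈ s, A ⊆ X ∧ Aᶜ ∉ D) ∧
      (∀ A ∈ s, ∀ B ∈ s, A ≠ B → (A ∩ B)ᶜ ∈ D) := by
    intro t
    induction t with
    | zero =>
      refine ⟨{X}, Finset.card_singleton X, ?_, ?_⟩
      · intro A hA; rw [Finset.mem_singleton] at hA; subst hA; exact ⟨le_refl _, hX⟩
      · intro A hA B hB hAB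
        rw [Finset.mem_singleton] at hA hB
        exact absurd (hA.trans hB.symm) hAB
    | succ t ih =>
      obtain ⟨s, hcard, hmem, hdisj⟩ := ih
      have hne : s.Nonempty := Finset.card_pos.mp (by omega)
      obtain ⟨A0, hA0⟩ := hne
      obtain ⟨hA0X, hA0pos⟩ := hmem A0 hA0
      obtain ⟨Y, hY1, hY2⟩ := hsplit A0 hA0X hA0pos
      set P := A0 ∩ Y with hP
      set Q := A0 ∩ Yᶜ with hQ
      have hPQdisjD : (P ∩ Q)ᶜ ∈ D := by
        have hpq : P ∩ Q = ∅ := by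
          apply Set.eq_empty_iff_forall_notMem.mpr
          rintro i ⟨⟨_, hiY⟩, ⟨_, hiY'⟩⟩
          exact hiY' hiY
        rw [hpq, Set.compl_empty]
        exact Filter.univ_mem
      have hPQ : P ≠ Q := by
        intro h
        apply hY1
        have hPempty : A0 ∩ Y = ∅ := by
          apply Set.eq_empty_iff_forall_notMem.mpr
          rintro i hi
          have hiQ : i ∈ Q := by rw [← h]; exact hi
          exact hiQ.2 hi.2
        rw [← hP] at hPempty
        rw [hP] at hPempty ⊢
        rw [hPempty, Set.compl_empty]
        exact Filter.univ_mem
      -- disjointness of P, Q with olds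
      have hPold : ∀ C ∈ s.erase A0, (P ∩ C)ᶜ ∈ D := by
        intro C hC
        rw [Finset.mem_erase] at hC
        have h1 : (A0 ∩ C)ᶜ ∈ D := hdisj A0 hA0 C hC.2 (Ne.symm hC.1)
        apply Filter.mem_of_superset h1
        intro i hi hicon
        exact hi ⟨hicon.1.1, hicon.2⟩
      have hQold : ∀ C ∈ s.erase A0, (Q ∩ C)ᶜ ∈ D := by
        intro C hC
        rw [Finset.mem_erase] at hC
        have h1 : (A0 ∩ C)ᶜ ∈ D := hdisj A0 hA0 C hC.2 (Ne.symm hC.1)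
        apply Filter.mem_of_superset h1
        intro i hi hicon
        exact hi ⟨hicon.1.1, hicon.2⟩
      have hPnot : P ∉ s.erase A0 := by
        intro hPin
        exact hY1 (by
          have := hPold P hPin
          rwa [Set.inter_self] at this)
      have hQnot : Q ∉ s.erase A0 := by
        intro hQin
        exact hY2 (by
          have := hQold Q hQin
          rwa [Set.inter_self] at this)
      have hPnot2 : P ∉ insert Q (s.erase A0) := by
        rw [Finset.mem_insert]
        rintro (h | h)
        · exact hPQ h
        · exact hPnot h
      refine ⟨insert P (insert Q (s.erase A0)), ?_, ?_, ?_⟩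
      · rw [Finset.card_insert_of_notMem hPnot2, Finset.card_insert_of_notMem hQnot,
          Finset.card_erase_of_mem hA0, hcard]
        omega
      · intro A hA
        rw [Finset.mem_insert, Finset.mem_insert] at hA
        rcases hA with rfl | rfl | hA
        · exact ⟨fun i hi => hA0X hi.1, hY1⟩
        · exact ⟨fun i hi => hA0X hi.1, hY2⟩
        · exact hmem A (Finset.mem_of_mem_erase hA)
      · intro A hA B hB hAB
        rw [Finset.mem_insert, Finset.mem_insert] at hA hB
        rcases hA with rfl | rfl | hA <;> rcases hB with rfl | rfl | hB
        · exact absurd rfl hAB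
        · exact hPQdisjD
        · exact hPold B hB
        · exact disj_symm hPQdisjD
        · exact absurd rfl hAB
        · exact hQold B hB
        · exact disj_symm (hPold A hA)
        · exact disj_symm (hQold A hA)
        · exact hdisj A (Finset.mem_of_mem_erase hA) B (Finset.mem_of_mem_erase hB) hAB
  obtain ⟨s, hcard, hmem, hdisj⟩ := hgrow m
  have := hccF s (fun A hA => (hmem A hA).2) hdisj
  omega

lemma exists_atom_partition (D : Filter κ) [D.NeBot] (m : ℕ)
    (hccF : ∀ s : Finset (Set κ), (∀ X ∈ s, Xᶜ ∉ D) →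
      (∀ X ∈ s, ∀ Y ∈ s, X ≠ Y → (X ∩ Y)ᶜ ∈ D) → s.card ≤ m) :
    ∃ s : Finset (Set κ), s.Nonempty ∧ (∀ A ∈ s, atomP D A) ∧
      (∀ A ∈ s, ∀ B ∈ s, A ≠ B → (A ∩ B)ᶜ ∈ D) ∧ ⋃₀ ↑s ∈ D := by
  classical
  set T : Set ℕ := {t | ∃ s : Finset (Set κ), s.card = t ∧ (∀ A ∈ s, atomP D A) ∧
      (∀ A ∈ s, ∀ B ∈ s, A ≠ B → (A ∩ B)ᶜ ∈ D)} with hT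
  have hTne : 1 ∈ T := by
    have huniv : (Set.univ : Set κ)ᶜ ∉ D := by
      rw [Set.compl_univ]; exact Filter.empty_notMem D
    obtain ⟨B, _, hB⟩ := exists_atom_below D m hccF Set.univ huniv
    refine ⟨{B}, Finset.card_singleton B, ?_, ?_⟩
    · intro A hA; rw [Finset.mem_singleton] at hA; subst hA; exact hB
    · intro A hA B' hB' hAB
      rw [Finset.mem_singleton] at hA hB'
      exact absurd (hA.trans hB'.symm) hAB
  have hTbdd : BddAbove T := by
    refine ⟨m, ?_⟩
    rintro t ⟨s, rfl, hat, hdisj⟩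
    exact hccF s (fun A hA => (hat A hA).1) hdisj
  have htmem : sSup T ∈ T := Nat.sSup_mem ⟨1, hTne⟩ hTbdd
  obtain ⟨s, hcard, hat, hdisj⟩ := htmem
  have hpos1 : 1 ≤ sSup T := le_csSup hTbdd hTne
  refine ⟨s, Finset.card_pos.mp (by omega), hat, hdisj, ?_⟩
  by_contra hU
  have hUpos : ((⋃₀ (↑s : Set (Set κ)))ᶜ)ᶜ ∉ D := by rwa [compl_compl]
  obtain ⟨C, hCsub, hCat⟩ := exists_atom_below D m hccF _ hUpos
  have hCnot : C ∉ s := by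
    intro hCin
    apply hCat.1
    have hCempty : C = ∅ := by
      apply Set.eq_empty_iff_forall_notMem.mpr
      intro i hi
      exact (hCsub hi) ⟨C, hCin, hi⟩
    rw [hCempty, Set.compl_empty]
    exact Filter.univ_mem
  have hnew : sSup T + 1 ∈ T := by
    refine ⟨insert C s, ?_, ?_, ?_⟩
    · rw [Finset.card_insert_of_notMem hCnot, hcard]
    · intro A hA
      rw [Finset.mem_insert] at hA
      rcases hA with rfl | hA
      · exact hCat
      · exact hat A hA
    · have hCdisj : ∀ A ∈ s, (C ∩ A)ᶜ ∈ D := by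
        intro A hA
        have : C ∩ A = ∅ := by
          apply Set.eq_empty_iff_forall_notMem.mpr
          rintro i ⟨hiC, hiA⟩
          exact (hCsub hiC) ⟨A, hA, hiA⟩
        rw [this, Set.compl_empty]
        exact Filter.univ_mem
      intro A hA B hB hAB
      rw [Finset.mem_insert] at hA hB
      rcases hA with rfl | hA <;> rcases hB with rfl | hB
      · exact absurd rfl hAB
      · exact hCdisj B hB
      · rw [Set.inter_comm]; exact hCdisj A hA
      · exact hdisj A hA B hB hAB
  have := le_csSup hTbdd hnew
  omega

/-- Filter induced by restriction to an atom. -/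
def mkU (D : Filter κ) (B : Set κ) : Filter κ where
  sets := {X | (B ∩ Xᶜ)ᶜ ∈ D}
  univ_sets := by
    simp only [Set.mem_setOf_eq, Set.compl_univ, Set.inter_empty, Set.compl_empty]
    exact Filter.univ_mem
  sets_of_superset := by
    intro X Y hX hXY
    simp only [Set.mem_setOf_eq] at *
    apply Filter.mem_of_superset hX
    intro i hi hcon
    exact hi ⟨hcon.1, fun hiX => hcon.2 (hXY hiX)⟩
  inter_sets := by
    intro X Y hX hY
    simp only [Set.mem_setOf_eq] at *
    apply Filter.mem_of_superset (Filter.inter_mem hX hY)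
    rintro i ⟨hiX, hiY⟩ ⟨hiB, hiXY⟩
    by_cases hx : i ∈ X
    · exact hiY ⟨hiB, fun hy => hiXY ⟨hx, hy⟩⟩
    · exact hiX ⟨hiB, hx⟩

lemma mem_mkU {D : Filter κ} {B X : Set κ} : X ∈ mkU D B ↔ (B ∩ Xᶜ)ᶜ ∈ D := Iff.rfl

lemma mkU_le (D : Filter κ) (B : Set κ) {X : Set κ} (hX : X ∈ D) : X ∈ mkU D B := by
  rw [mem_mkU]
  apply Filter.mem_of_superset hX
  intro i hi hcon
  exact hcon.2 hi

lemma mkU_empty_not_mem {D : Filter κ} {B : Set κ} (hB : Bᶜ ∉ D) : ∅ ∉ mkU D B := by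
  rw [mem_mkU]
  simpa using hB

lemma mkU_ultra {D : Filter κ} {B : Set κ} (hB : atomP D B) (X : Set κ) :
    X ∈ mkU D B ∨ Xᶜ ∈ mkU D B := by
  by_cases h : (B ∩ X)ᶜ ∉ D
  · left; rw [mem_mkU]; exact hB.2 X h
  · right; rw [mem_mkU, compl_compl]
    push_neg at h
    exact h

lemma mkU_not_both {D : Filter κ} {B : Set κ} (hB : Bᶜ ∉ D) (X : Set κ)
    (h1 : X ∈ mkU D B) (h2 : Xᶜ ∈ mkU D B) : False := by
  have := Filter.inter_mem h1 h2
  rw [Set.inter_compl_self] at this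
  exact mkU_empty_not_mem hB this

lemma mkU_B_mem {D : Filter κ} (B : Set κ) : B ∈ mkU D B := by
  rw [mem_mkU, Set.inter_compl_self, Set.compl_empty]
  exact Filter.univ_mem


lemma glue (D : Filter κ) (lams : κ → Cardinal.{u}) (s : Finset (Set κ)) (hsne : s.Nonempty)
    (hat : ∀ A ∈ s, atomP D A) (hdisj : ∀ A ∈ s, ∀ B ∈ s, A ≠ B → (A ∩ B)ᶜ ∈ D)
    (h : {A // A ∈ s} → Pi' lams) :
    ∃ H : Pi' lams, ∀ j : {A // A ∈ s}, {i | H.1 i ≠ (h j).1 i} ∉ mkU D j.1 := by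
  classical
  haveI hne : Nonempty {A // A ∈ s} := ⟨⟨hsne.choose, hsne.choose_spec⟩⟩
  set J : κ → {A // A ∈ s} := fun i =>
    if hh : ∃ j : {A // A ∈ s}, i ∈ j.1 then hh.choose else Classical.arbitrary _ with hJdef
  refine ⟨⟨fun i => (h (J i)).1 i, fun i => (h (J i)).2 i⟩, ?_⟩
  intro j hmem
  set Sj : Set κ := j.1 ∩ ⋂ k : {A // A ∈ s}, (if k = j then Set.univ else (k.1)ᶜ) with hSjdef
  have hSj : Sj ∈ mkU D j.1 := by
    apply Filter.inter_mem (mkU_B_mem _)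
    rw [Filter.iInter_mem]
    intro k
    by_cases hk : k = j
    · rw [if_pos hk]; exact Filter.univ_mem
    · rw [if_neg hk, mem_mkU, compl_compl]
      exact hdisj j.1 j.2 k.1 k.2 fun hv => hk (Subtype.ext hv).symm
  have hJeq : ∀ i ∈ Sj, J i = j := by
    intro i hi
    by_contra hne'
    have hex : ∃ j' : {A // A ∈ s}, i ∈ j'.1 := ⟨j, hi.1⟩
    have hJ : J i = hex.choose := by rw [hJdef]; simp only [dif_pos hex]
    have hmem' : i ∈ (J i).1 := by rw [hJ]; exact hex.choose_spec
    have hII := hi.2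
    rw [Set.mem_iInter] at hII
    have := hII (J i)
    rw [if_neg hne'] at this
    exact this hmem'
  have hint : {i | (h (J i)).1 i ≠ (h j).1 i} ∩ Sj = ∅ := by
    apply Set.eq_empty_iff_forall_notMem.mpr
    rintro i ⟨hiD, hiS⟩
    exact hiD (by rw [hJeq i hiS])
  have hcon := Filter.inter_mem hmem hSj
  rw [hint] at hcon
  exact mkU_empty_not_mem (hat j.1 j.2).1 hcon

lemma finite_branch (D : Filter κ) [D.NeBot] (lams : κ → Cardinal.{u}) (m : ℕ)
    (hccF : ∀ s : Finset (Set κ), (∀ X ∈ s, Xᶜ ∉ D) →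
      (∀ X ∈ s, ∀ Y ∈ s, X ≠ Y → (X ∩ Y)ᶜ ∈ D) → s.card ≤ m)
    {c σ : Cardinal.{u}} (hc : c ∈ S0set D lams) (hσ : σ ∈ S2set D lams) :
    c ≤ σ := by
  classical
  by_contra hlt
  push_neg at hlt
  obtain ⟨s, hsne, hat, hdisj, hsU⟩ := exists_atom_partition D m hccF
  set ι := {A // A ∈ s} with hι
  obtain ⟨f, hfbd, hfpw⟩ := hc
  obtain ⟨g, hgbd, hgcov⟩ := hσ
  -- key: membership in D iff membership in every atom filter
  have hD_iff : ∀ X : Set κ, X ∈ D ↔ ∀ j : ι, X ∈ mkU D j.1 := by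
    intro X
    constructor
    · intro hX j; exact mkU_le D _ hX
    · intro hall
      have h1 : (⋂ j : ι, (j.1 ∩ Xᶜ)ᶜ) ∈ D := by
        rw [Filter.iInter_mem]
        intro j
        exact mem_mkU.mp (hall j)
      have h2 := Filter.inter_mem hsU h1
      apply Filter.mem_of_superset h2
      rintro i ⟨hiU, hiI⟩
      obtain ⟨A, hA, hiA⟩ := hiU
      rw [Set.mem_iInter] at hiI
      have := hiI ⟨A, hA⟩
      by_contra hiX
      exact this ⟨hiA, hiX⟩
  -- setoids
  have hrel : ∀ j : ι, Equivalence (fun f' g' : Pi' lams => {i | f'.1 i ≠ g'.1 i} ∉ mkU D j.1) := by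
    intro j
    constructor
    · intro x
      have : {i | x.1 i ≠ x.1 i} = (∅ : Set κ) := by ext i; simp
      rw [this]
      exact mkU_empty_not_mem (hat j.1 j.2).1
    · intro x y hxy
      rwa [neD_set_comm]
    · intro x y z hxy hyz hcon
      have hxy' : {i | x.1 i ≠ y.1 i}ᶜ ∈ mkU D j.1 :=
        (mkU_ultra (hat j.1 j.2) _).resolve_left hxy
      have hyz' : {i | y.1 i ≠ z.1 i}ᶜ ∈ mkU D j.1 :=
        (mkU_ultra (hat j.1 j.2) _).resolve_left hyz
      have := Filter.inter_mem hcon (Filter.inter_mem hxy' hyz')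
      have hempty : {i | x.1 i ≠ z.1 i} ∩ ({i | x.1 i ≠ y.1 i}ᶜ ∩ {i | y.1 i ≠ z.1 i}ᶜ) = ∅ := by
        apply Set.eq_empty_iff_forall_notMem.mpr
        rintro i ⟨hi1, hi2, hi3⟩
        simp only [Set.mem_compl_iff, Set.mem_setOf_eq, not_not] at hi2 hi3
        exact hi1 (hi2.trans hi3)
      rw [hempty] at this
      exact mkU_empty_not_mem (hat j.1 j.2).1 this
  set sd : ι → Setoid (Pi' lams) := fun j =>
    ⟨fun f' g' => {i | f'.1 i ≠ g'.1 i} ∉ mkU D j.1, hrel j⟩ with hsd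
  -- c is a lower bound for the quotients
  have hcard : ∀ j : ι, Cardinal.lift.{u+1} c ≤ #(Quotient (sd j)) := by
    intro j
    rw [← Cardinal.card_ord c, ← Ordinal.mk_Iio_ordinal]
    apply Cardinal.mk_le_of_injective
      (f := fun α : Set.Iio c.ord => Quotient.mk (sd j) ⟨f α.1, hfbd α.1 α.2⟩)
    intro a b hab
    by_contra hne
    have hvne : a.1 ≠ b.1 := fun hv => hne (Subtype.ext hv)
    have hD := pw_sym hfpw a.2 b.2 hvne
    have hrel' := Quotient.exact hab
    exact hrel' (mkU_le D _ hD)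
  -- pick an unrepresented class in each quotient
  have havoid : ∀ j : ι, ∃ q : Quotient (sd j),
      ∀ γ : Set.Iio σ.ord, q ≠ Quotient.mk (sd j) ⟨g γ.1, hgbd γ.1 γ.2⟩ := by
    intro j
    by_contra hall
    push_neg at hall
    have hsurj : ∀ q : Quotient (sd j), q ∈ Set.range
        (fun γ : Set.Iio σ.ord => Quotient.mk (sd j) ⟨g γ.1, hgbd γ.1 γ.2⟩) := by
      intro q
      obtain ⟨γ, hγ⟩ := hall q
      exact ⟨γ, hγ.symm⟩
    have h1 : #(Quotient (sd j)) ≤ #(Set.Iio σ.ord) := by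
      rw [← Cardinal.mk_univ (α := Quotient (sd j)),
        ← Set.eq_univ_iff_forall.mpr hsurj]
      exact Cardinal.mk_range_le
    rw [Ordinal.mk_Iio_ordinal, Cardinal.card_ord] at h1
    have := (hcard j).trans h1
    rw [Cardinal.lift_le] at this
    exact absurd this (not_le.mpr hlt)
  choose q hq using havoid
  have hrep : ∀ j : ι, ∃ a : Pi' lams, Quotient.mk (sd j) a = q j :=
    fun j => (q j).exists_rep
  choose hh hhq using hrep
  -- glue
  obtain ⟨H, hH⟩ := glue D lams s hsne hat hdisj hh
  -- H differs from every g γ mod every atom filter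
  have hHg : ∀ (γ : Ordinal.{u}) (hγ : γ < σ.ord) (j : ι),
      {i | H.1 i ≠ g γ i} ∈ mkU D j.1 := by
    intro γ hγ j
    have h1 : {i | (hh j).1 i ≠ g γ i} ∈ mkU D j.1 := by
      by_contra hcon
      have : Quotient.mk (sd j) (hh j) = Quotient.mk (sd j) ⟨g γ, hgbd γ hγ⟩ :=
        Quotient.sound hcon
      rw [hhq j] at this
      exact hq j ⟨γ, hγ⟩ this
    have h2 : {i | H.1 i ≠ (hh j).1 i}ᶜ ∈ mkU D j.1 :=
      (mkU_ultra (hat j.1 j.2) _).resolve_left (hH j)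
    have h3 := Filter.inter_mem h1 h2
    apply Filter.mem_of_superset h3
    rintro i ⟨hi1, hi2⟩
    simp only [Set.mem_compl_iff, Set.mem_setOf_eq, not_not] at hi2
    simp only [Set.mem_setOf_eq]
    rw [hi2]
    exact hi1
  -- contradiction with covering
  obtain ⟨γ, hγ, hnd⟩ := hgcov H.1 H.2
  apply hnd
  rw [neD, hD_iff]
  intro j
  exact hHg γ hγ j

end S17

/-- If `P(κ)/D` satisfies the `μ⁺`-chain condition and `T⁰_D(λ̄) > μ`, then
`T⁰ = T¹ = T²` and the supremum in the definition of `T⁰_D(λ̄)` is attained. -/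
theorem stmt_17 {κ : Type u} (D : Filter κ) [D.NeBot]
    (lams : κ → Cardinal.{u}) (μ : Cardinal.{u})
    (hcc : ¬ ∃ A : Ordinal.{u} → Set κ,
      (∀ ε : Ordinal.{u}, ε < (Order.succ μ).ord → (A ε)ᶜ ∉ D) ∧
      (∀ ε ζ : Ordinal.{u}, ε < ζ → ζ < (Order.succ μ).ord → (A ε ∩ A ζ)ᶜ ∈ D))
    (hT : μ < T0 D lams) :
    T0 D lams = T1 D lams ∧ T0 D lams = T2 D lams ∧
    ∃ f : Ordinal.{u} → κ → Ordinal.{u},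
      (∀ α : Ordinal.{u}, α < (T0 D lams).ord → ∀ i : κ, f α i < (lams i).ord) ∧
      (∀ α β : Ordinal.{u}, α < β → β < (T0 D lams).ord → neD D (f α) (f β)) := by
  classical
  obtain ⟨cM, hcM1⟩ := S17.exists_maximal_enum D lams
  have hcM0 : cM ∈ S17.S0set D lams := by
    obtain ⟨f, h1, h2, _⟩ := hcM1
    exact ⟨f, h1, h2⟩
  have hS2ne : (S17.S2set D lams).Nonempty := ⟨cM, S17.S1_subset_S2 D lams hcM1⟩
  set σ2 := sInf (S17.S2set D lams) with hσ2def
  have hσ2 : σ2 ∈ S17.S2set D lams := csInf_mem hS2ne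
  have hbdd : BddAbove (S17.S0set D lams) :=
    ⟨Cardinal.prod lams, fun c hc => S17.S0_le_prod hc⟩
  have hT0σ2 : T0 D lams ≤ σ2 := by
    rcases lt_or_ge μ Cardinal.aleph0 with hfin | hinf
    · obtain ⟨mm, hmm⟩ := Cardinal.lt_aleph0.mp hfin
      have hccF := S17.hcc_finset D μ mm hmm.symm hcc
      rw [S17.T0_eq]
      exact csSup_le ⟨cM, hcM0⟩ (fun c hc => S17.finite_branch D lams mm hccF hc hσ2)
    · have h1 : T0 D lams ≤ σ2 * μ := by
        rw [S17.T0_eq]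
        exact csSup_le ⟨cM, hcM0⟩ (fun c hc => S17.card_le_mul D lams μ hcc hc hσ2)
      have h2 : σ2 * μ ≤ max σ2 μ := Cardinal.mul_le_max_of_aleph0_le_right hinf
      have h3 := h1.trans h2
      rcases max_choice σ2 μ with hm | hm
      · rwa [hm] at h3
      · rw [hm] at h3
        exact absurd (lt_of_lt_of_le hT h3) (lt_irrefl μ)
  have hT2T1 : σ2 ≤ T1 D lams := by
    rw [S17.T1_eq]
    exact csInf_le_csInf (OrderBot.bddBelow _) ⟨cM, hcM1⟩ (S17.S1_subset_S2 D lams)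
  have hT1cM : T1 D lams ≤ cM := by
    rw [S17.T1_eq]
    exact csInf_le (OrderBot.bddBelow _) hcM1
  have hcMT0 : cM ≤ T0 D lams := by
    rw [S17.T0_eq]
    exact le_csSup hbdd hcM0
  have hT0cM : T0 D lams = cM :=
    le_antisymm (hT0σ2.trans (hT2T1.trans hT1cM)) hcMT0
  refine ⟨?_, ?_, ?_⟩
  · exact le_antisymm (hT0σ2.trans hT2T1) (hT1cM.trans hcMT0)
  · exact le_antisymm hT0σ2 ((hT2T1.trans hT1cM).trans hcMT0)
  · obtain ⟨f, h1, h2, _⟩ := hcM1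
    rw [hT0cM]
    exact ⟨f, h1, h2⟩
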